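/- Assume the characteristic of F is 2. If C ⊆ F^n is an 𝔽_q-linear additive conjucyclic code, then its alternating dual C^{⊥_a} is also an 𝔽_q-linear additive conjucyclic code, i.e. C^{⊥_a} is a K-linear subspace with T(C^{⊥_a}) ⊆ C^{⊥_a}. -/

import Mathlib

/-- The conjucyclic shift `T : F^n → F^n`, `T(c₀,…,c_{n−1}) = (c̄_{n−1}, c₀,…,c_{n−2})`
with `c̄ = c^q`. -/
def Tshift (q n : ℕ) {F : Type*} [Field F] (c : Fin n → F) : Fin n → F :=
  fun i =>
    if _h : (i : ℕ) = 0 then (c ⟨n - 1, by have := i.isLt; omega⟩) ^ q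
    else c ⟨(i : ℕ) - 1, by have := i.isLt; omega⟩

/-- The alternating inner product on `F^n`:
`⟨u,v⟩_a = (β̄² − β²) Σ_{i=0}^{n−1} (u_i v̄_i − ū_i v_i)`, where `x̄ = x^q`. -/
def altInner (q n : ℕ) {F : Type*} [Field F] (β : F) (u v : Fin n → F) : F :=
  ((β ^ q) ^ 2 - β ^ 2) * ∑ i : Fin n, (u i * (v i) ^ q - (u i) ^ q * v i)

/-- Assume `char F = 2`.  If `C ⊆ F^n` is an `𝔽_q`-linear additive
conjucyclic code (a `K`-subspace with `T(C) ⊆ C`), then its alternating dual `C^{⊥_a}` is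
also an `𝔽_q`-linear additive conjucyclic code: it is a `K`-linear subspace of `F^n` with
`T(C^{⊥_a}) ⊆ C^{⊥_a}`. -/
theorem stmt17 (q n : ℕ) (hn : 0 < n) {K F : Type*} [Field K] [Fintype K] [Field F]
    [Fintype F] [Algebra K F] (hchar : ringChar F = 2)
    (hK : Fintype.card K = q) (hF : Fintype.card F = q ^ 2)
    (β : F) (hβ : ∀ x : F, x ≠ 0 → ∃ j : ℕ, x = β ^ j)
    (C : Submodule K (Fin n → F)) (hC : ∀ c ∈ C, Tshift q n c ∈ C) :
    ∃ S : Submodule K (Fin n → F),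
      (S : Set (Fin n → F)) = {v : Fin n → F | ∀ u ∈ C, altInner q n β u v = 0} ∧
      ∀ v ∈ S, Tshift q n v ∈ S := by
  haveI : Fact (Nat.Prime 2) := ⟨Nat.prime_two⟩
  haveI hF2 : CharP F 2 := hchar ▸ ringChar.charP F
  haveI hFK : CharP F (ringChar K) :=
    charP_of_injective_algebraMap (algebraMap K F).injective (ringChar K)
  have hrK : ringChar K = 2 := by
    have h1 : ringChar F = ringChar K := ringChar.eq F (ringChar K)
    rw [hchar] at h1; exact h1.symm
  haveI hK2 : CharP K 2 := hrK ▸ ringChar.charP K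
  obtain ⟨m, -, hm⟩ := FiniteField.card K 2
  have hq2 : q = 2 ^ (m : ℕ) := by rw [← hK, hm]
  have hq0 : q ≠ 0 := by
    have := Fintype.card_pos (α := K); omega
  -- Frobenius facts
  have hadd : ∀ a b : F, (a + b) ^ q = a ^ q + b ^ q := by
    intro a b; rw [hq2]; haveI := hF2; exact add_pow_char_pow a b 2 m
  have hqq : ∀ x : F, (x ^ q) ^ q = x := by
    intro x; rw [← pow_mul, ← sq, ← hF]; exact FiniteField.pow_card x
  have hkq : ∀ k : K, (algebraMap K F k) ^ q = algebraMap K F k := by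
    intro k; rw [← map_pow, ← hK, FiniteField.pow_card]
  have hneg : ∀ x : F, -x = x := fun x => by haveI := hF2; exact CharTwo.neg_eq x
  -- the dual set
  set D : Set (Fin n → F) := {v : Fin n → F | ∀ u ∈ C, altInner q n β u v = 0} with hD
  have zero_mem : (0 : Fin n → F) ∈ D := by
    intro u hu
    simp [altInner, zero_pow hq0]
  have add_mem : ∀ {a b : Fin n → F}, a ∈ D → b ∈ D → a + b ∈ D := by
    intro a b ha hb u hu
    have hsum : ∑ i : Fin n, (u i * ((a + b) i) ^ q - (u i) ^ q * (a + b) i)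
        = (∑ i : Fin n, (u i * (a i) ^ q - (u i) ^ q * a i))
          + ∑ i : Fin n, (u i * (b i) ^ q - (u i) ^ q * b i) := by
      rw [← Finset.sum_add_distrib]
      apply Finset.sum_congr rfl
      intro i _
      simp only [Pi.add_apply]
      rw [hadd]; ring
    have : altInner q n β u (a + b) = altInner q n β u a + altInner q n β u b := by
      simp only [altInner]
      rw [hsum]; ring
    rw [this, ha u hu, hb u hu, add_zero]
  have smul_mem : ∀ (k : K) {a : Fin n → F}, a ∈ D → k • a ∈ D := by
    intro k a ha u hu
    have hsum : ∑ i : Fin n, (u i * ((k • a) i) ^ q - (u i) ^ q * (k • a) i)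
        = algebraMap K F k * ∑ i : Fin n, (u i * (a i) ^ q - (u i) ^ q * a i) := by
      rw [Finset.mul_sum]
      apply Finset.sum_congr rfl
      intro i _
      simp only [Pi.smul_apply, Algebra.smul_def]
      rw [mul_pow, hkq]; ring
    have : altInner q n β u (k • a) = algebraMap K F k * altInner q n β u a := by
      simp only [altInner]
      rw [hsum]; ring
    rw [this, ha u hu, mul_zero]
  -- key shift-invariance
  have key : ∀ w v : Fin n → F,
      altInner q n β (Tshift q n w) (Tshift q n v) = altInner q n β w v := by
    obtain ⟨m', rfl⟩ : ∃ m', n = m' + 1 := ⟨n - 1, by omega⟩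
    intro w v
    unfold altInner
    congr 1
    have hsc : ∀ (c : Fin (m' + 1) → F) (i : Fin m'),
        Tshift q (m' + 1) c i.succ = c i.castSucc := by
      intro c i
      unfold Tshift
      rw [dif_neg (by simp)]
      exact congrArg c (Fin.ext (by simp))
    have h0 : ∀ (c : Fin (m' + 1) → F),
        Tshift q (m' + 1) c 0 = (c (Fin.last m')) ^ q := by
      intro c
      unfold Tshift
      rw [dif_pos (Fin.val_zero _)]
      exact congrArg (· ^ q) (congrArg c (Fin.ext (by simp [Fin.last])))
    have hb : Tshift q (m' + 1) w 0 * (Tshift q (m' + 1) v 0) ^ q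
        - (Tshift q (m' + 1) w 0) ^ q * Tshift q (m' + 1) v 0
        = w (Fin.last m') * (v (Fin.last m')) ^ q
          - (w (Fin.last m')) ^ q * v (Fin.last m') := by
      rw [h0, h0]
      simp only [hqq]
      rw [← hneg (w (Fin.last m') * v (Fin.last m') ^ q - w (Fin.last m') ^ q * v (Fin.last m'))]
      ring
    have hs : ∑ i : Fin m',
        (Tshift q (m' + 1) w i.succ * (Tshift q (m' + 1) v i.succ) ^ q
          - (Tshift q (m' + 1) w i.succ) ^ q * Tshift q (m' + 1) v i.succ)
        = ∑ i : Fin m',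
        (w i.castSucc * (v i.castSucc) ^ q - (w i.castSucc) ^ q * v i.castSucc) := by
      apply Finset.sum_congr rfl
      intro i _
      rw [hsc, hsc]
    rw [Fin.sum_univ_succ, Fin.sum_univ_castSucc, hb, hs, add_comm]
  -- injectivity of Tshift
  have hinj : Function.Injective (Tshift q n (F := F)) := by
    intro a b hab
    funext i
    rcases Nat.lt_or_ge (i : ℕ) (n - 1) with h | h
    · have h1 := congrFun hab ⟨(i : ℕ) + 1, by omega⟩
      unfold Tshift at h1
      rw [dif_neg (by simp), dif_neg (by simp)] at h1
      simpa [Nat.add_sub_cancel] using h1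
    · have hi : (i : ℕ) = n - 1 := by have := i.isLt; omega
      have h1 := congrFun hab ⟨0, hn⟩
      unfold Tshift at h1
      rw [dif_pos rfl, dif_pos rfl] at h1
      have h2 : a ⟨n - 1, by omega⟩ = b ⟨n - 1, by omega⟩ := by
        have h3 := congrArg (· ^ q) h1
        simpa [hqq] using h3
      have hie : i = ⟨n - 1, by omega⟩ := Fin.ext hi
      rw [hie]; exact h2
  -- surjectivity of Tshift on C
  have hsurjC : ∀ u ∈ C, ∃ w ∈ C, Tshift q n w = u := by
    let f : C → C := fun c => ⟨Tshift q n c, hC c c.2⟩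
    have hfinj : Function.Injective f := by
      intro a b h
      exact Subtype.ext (hinj (congrArg Subtype.val h))
    have hfsurj := Finite.injective_iff_surjective.mp hfinj
    intro u hu
    obtain ⟨w, hw⟩ := hfsurj ⟨u, hu⟩
    exact ⟨w, w.2, congrArg Subtype.val hw⟩
  refine ⟨{ carrier := D, add_mem' := add_mem, zero_mem' := zero_mem,
            smul_mem' := smul_mem }, rfl, ?_⟩
  intro v hv u hu
  obtain ⟨w, hwC, hwu⟩ := hsurjC u hu
  rw [← hwu, key]
  exact hv w hwC
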